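/- In U_q(sl(n+1)) with comultiplication Δ(E_i) = E_i ⊗ K_i + 1 ⊗ E_i and Δ(K_i) = K_i ⊗ K_i, the iterated q-bracket X_i = [[E_1,E_2]_q,...,E_i]_q satisfies Δ(X_i) = 1 ⊗ X_i + Σ_{m=1}^{i-1} X_m ⊗ [[K_1···K_m, E_{m+1}]_q, ..., E_i]_q + X_i ⊗ K_1···K_i, where X_1 = E_1. -/

import Mathlib

open Finset TensorProduct

/-- The parameter `q`, an indeterminate over `ℚ`. -/
noncomputable def q : RatFunc ℚ := RatFunc.X

lemma q_ne : q ≠ 0 := RatFunc.X_ne_zero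

section Aux

variable {A : Type*} [Ring A] [Algebra (RatFunc ℚ) A]

lemma smul_qinv {M : Type*} [AddCommGroup M] [Module (RatFunc ℚ) M] (x : M) :
    q • ((q ^ (-1 : ℤ)) • x) = x := by
  rw [smul_smul, zpow_neg_one, mul_inv_cancel₀ q_ne, one_smul]

set_option synthInstance.maxHeartbeats 1000000 in
lemma tmul_qsmul (a b : A) (r : RatFunc ℚ) :
    a ⊗ₜ[RatFunc ℚ] (r • b) = r • (a ⊗ₜ[RatFunc ℚ] b) := by
  rw [TensorProduct.tmul_smul]

lemma qsmul_tmul (a b : A) (r : RatFunc ℚ) :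
    (r • a) ⊗ₜ[RatFunc ℚ] b = r • (a ⊗ₜ[RatFunc ℚ] b) := by
  rw [TensorProduct.smul_tmul']

lemma Kstep (k e z : A) (a c : ℤ) (hz : k * z = q ^ a • (z * k))
    (he : k * e = q ^ c • (e * k)) :
    k * (z * e - q • (e * z)) = q ^ (a + c) • ((z * e - q • (e * z)) * k) := by
  have h1 : k * (z * e) = q ^ (a + c) • (z * e * k) := by
    rw [← mul_assoc, hz, smul_mul_assoc, mul_assoc, he, mul_smul_comm, smul_smul,
      ← zpow_add₀ q_ne, ← mul_assoc]
  have h2 : k * (e * z) = q ^ (a + c) • (e * z * k) := by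
    rw [← mul_assoc, he, smul_mul_assoc, mul_assoc, hz, mul_smul_comm, smul_smul,
      ← zpow_add₀ q_ne, ← mul_assoc, add_comm c a]
  calc k * (z * e - q • (e * z)) = k * (z * e) - q • (k * (e * z)) := by
        rw [mul_sub, mul_smul_comm]
    _ = q ^ (a + c) • (z * e * k) - q • (q ^ (a + c) • (e * z * k)) := by rw [h1, h2]
    _ = q ^ (a + c) • ((z * e - q • (e * z)) * k) := by
        rw [sub_mul, smul_mul_assoc, smul_sub, smul_comm q]

lemma K_prod_comm (Kg : ℕ → A) (hKK : ∀ i j, Kg i * Kg j = Kg j * Kg i) (r : ℕ) :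
    ∀ l : List ℕ, Kg r * (l.map Kg).prod = (l.map Kg).prod * Kg r := by
  intro l
  induction l with
  | nil => simp
  | cons a t ih =>
      rw [List.map_cons, List.prod_cons, ← mul_assoc, hKK r a, mul_assoc, ih, ← mul_assoc]

lemma split3 {B : Type*} [Ring B] [Module (RatFunc ℚ) B] [SMulCommClass (RatFunc ℚ) B B]
    [IsScalarTower (RatFunc ℚ) B B] (T S U V : B) :
    (T + S + U) * V - q • (V * (T + S + U)) =
      (T * V - q • (V * T)) + (S * V - q • (V * S)) + (U * V - q • (V * U)) := by
  simp only [add_mul, mul_add, smul_add]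
  abel

end Aux

set_option maxHeartbeats 1000000 in
/-- In `U_q(sl(n+1))` with `Δ(E_i) = E_i ⊗ K_i + 1 ⊗ E_i` and
`Δ(K_i) = K_i ⊗ K_i`, the iterated `q`-bracket `X_i = [[E_1,E_2]_q,…,E_i]_q`
satisfies
`Δ(X_i) = 1 ⊗ X_i + Σ_{m=1}^{i-1} X_m ⊗ [[K_1⋯K_m, E_{m+1}]_q,…,E_i]_q + X_i ⊗ K_1⋯K_i`. -/
theorem comul_Xi (n : ℕ) {A : Type*} [Ring A] [Algebra (RatFunc ℚ) A]
    (Δ : A →ₐ[RatFunc ℚ] A ⊗[RatFunc ℚ] A) (E Kg : ℕ → A)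
    (hcomm : ∀ i j, 1 ≤ i → i ≤ n → 1 ≤ j → j ≤ n → (i + 2 ≤ j ∨ j + 2 ≤ i) →
      E i * E j = E j * E i)
    (hserre : ∀ i j, 1 ≤ i → i ≤ n → 1 ≤ j → j ≤ n → (i + 1 = j ∨ j + 1 = i) →
      E i * E i * E j - (q + q⁻¹) • (E i * E j * E i) + E j * E i * E i = 0)
    (hKK : ∀ i j, Kg i * Kg j = Kg j * Kg i)
    (hKE : ∀ i j, 1 ≤ i → i ≤ n → 1 ≤ j → j ≤ n →
      Kg i * E j =
        (q ^ (if i = j then (2 : ℤ) else if i + 1 = j ∨ j + 1 = i then -1 else 0)) •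
          (E j * Kg i))
    (hΔE : ∀ i, 1 ≤ i → i ≤ n → Δ (E i) = E i ⊗ₜ[RatFunc ℚ] Kg i + 1 ⊗ₜ[RatFunc ℚ] E i)
    (hΔK : ∀ i, 1 ≤ i → i ≤ n → Δ (Kg i) = Kg i ⊗ₜ[RatFunc ℚ] Kg i)
    (X : ℕ → A) (hX1 : X 1 = E 1)
    (hX : ∀ j, 1 ≤ j → X (j + 1) = X j * E (j + 1) - q • (E (j + 1) * X j))
    -- `Y m i = [[K_1⋯K_m, E_{m+1}]_q, …, E_i]_q`
    (Y : ℕ → ℕ → A) (hYbase : ∀ m, Y m m = (List.map Kg (List.range' 1 m)).prod)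
    (hYstep : ∀ m i, m ≤ i → Y m (i + 1) = Y m i * E (i + 1) - q • (E (i + 1) * Y m i)) :
    ∀ i, 1 ≤ i → i ≤ n →
      Δ (X i) =
        1 ⊗ₜ[RatFunc ℚ] X i +
        (∑ m ∈ Icc 1 (i - 1), X m ⊗ₜ[RatFunc ℚ] Y m i) +
        X i ⊗ₜ[RatFunc ℚ] (List.map Kg (List.range' 1 i)).prod := by
  -- E_r commutes with X_m when r ≥ m + 2
  have hEX : ∀ m, 1 ≤ m → ∀ r, m + 2 ≤ r → r ≤ n → E r * X m = X m * E r := by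
    intro m hm
    induction m, hm using Nat.le_induction with
    | base =>
        intro r hr hrn
        rw [hX1]
        exact hcomm r 1 (by omega) hrn le_rfl (by omega) (Or.inr (by omega))
    | succ m hm ih =>
        intro r hr hrn
        have hc : E r * E (m + 1) = E (m + 1) * E r :=
          hcomm r (m + 1) (by omega) hrn (by omega) (by omega) (Or.inr (by omega))
        have h1 : E r * (X m * E (m + 1)) = X m * E (m + 1) * E r := by
          rw [← mul_assoc, ih r (by omega) hrn, mul_assoc, hc, ← mul_assoc]
        have h2 : E r * (E (m + 1) * X m) = E (m + 1) * X m * E r := by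
          rw [← mul_assoc, hc, mul_assoc, ih r (by omega) hrn, ← mul_assoc]
        rw [hX m hm, mul_sub, sub_mul, h1, mul_smul_comm, smul_mul_assoc, h2]
  -- commutation of Kg r past X j for r > j
  have hKX : ∀ j, 1 ≤ j → ∀ r, j < r → r ≤ n →
      Kg r * X j = q ^ (if r = j + 1 then (-1 : ℤ) else 0) • (X j * Kg r) := by
    intro j hj
    induction j, hj using Nat.le_induction with
    | base =>
        intro r hr hrn
        have he : (if r = 1 then (2 : ℤ) else if r + 1 = 1 ∨ 1 + 1 = r then -1 else 0) =
            (if r = 1 + 1 then (-1 : ℤ) else 0) := by split_ifs <;> omega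
        rw [hX1, hKE r 1 (by omega) hrn le_rfl (by omega), he]
    | succ j hj ih =>
        intro r hr hrn
        have hez : Kg r * E (j + 1) =
            q ^ (if r = j + 2 then (-1 : ℤ) else 0) • (E (j + 1) * Kg r) := by
          rw [hKE r (j + 1) (by omega) hrn (by omega) (by omega)]
          congr 1
          congr 1
          split_ifs <;> omega
        have key := Kstep (Kg r) (E (j + 1)) (X j) _ _ (ih r (by omega) hrn) hez
        have hexp : (if r = j + 1 then (-1 : ℤ) else 0) + (if r = j + 2 then (-1 : ℤ) else 0) =
            (if r = j + 1 + 1 then (-1 : ℤ) else 0) := by split_ifs <;> omega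
        rw [hX j hj, key, hexp]
  -- commutation of Kg r past Y m j for m < j < r
  have hKY : ∀ m, 1 ≤ m → ∀ j, m < j → ∀ r, j < r → r ≤ n →
      Kg r * Y m j = q ^ (if r = j + 1 then (-1 : ℤ) else 0) • (Y m j * Kg r) := by
    intro m hm j hj
    induction j, hj using Nat.le_induction with
    | base =>
        intro r hr hrn
        have hP : Kg r * Y m m = q ^ (0 : ℤ) • (Y m m * Kg r) := by
          rw [hYbase, K_prod_comm Kg hKK, zpow_zero, one_smul]
        have hez : Kg r * E (m + 1) =
            q ^ (if r = m + 1 + 1 then (-1 : ℤ) else 0) • (E (m + 1) * Kg r) := by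
          rw [hKE r (m + 1) (by omega) hrn (by omega) (by omega)]
          congr 1
          congr 1
          split_ifs <;> omega
        have key := Kstep (Kg r) (E (m + 1)) (Y m m) _ _ hP hez
        rw [hYstep m m le_rfl, key, zero_add]
    | succ j hj ih =>
        intro r hr hrn
        have hez : Kg r * E (j + 1) =
            q ^ (if r = j + 2 then (-1 : ℤ) else 0) • (E (j + 1) * Kg r) := by
          rw [hKE r (j + 1) (by omega) hrn (by omega) (by omega)]
          congr 1
          congr 1
          split_ifs <;> omega
        have key := Kstep (Kg r) (E (j + 1)) (Y m j) _ _ (ih r (by omega) hrn) hez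
        have hexp : (if r = j + 1 then (-1 : ℤ) else 0) + (if r = j + 2 then (-1 : ℤ) else 0) =
            (if r = j + 1 + 1 then (-1 : ℤ) else 0) := by split_ifs <;> omega
        rw [hYstep m j (by omega), key, hexp]
  intro i hi
  induction i, hi using Nat.le_induction with
  | base =>
      intro hn1
      rw [hX1, hΔE 1 le_rfl hn1, show (1 : ℕ) - 1 = 0 from rfl,
        Finset.Icc_eq_empty (by omega), Finset.sum_empty, add_zero, List.range'_one]
      simp only [List.map_cons, List.map_nil, List.prod_cons, List.prod_nil, mul_one]
      rw [add_comm]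
  | succ i hi IH =>
      intro hsn
      have hin : i ≤ n := by omega
      have hkX : Kg (i + 1) * X i = q ^ (-1 : ℤ) • (X i * Kg (i + 1)) := by
        have h := hKX i hi (i + 1) (by omega) hsn
        simpa using h
      have hPk : (List.map Kg (List.range' 1 (i + 1))).prod =
          (List.map Kg (List.range' 1 i)).prod * Kg (i + 1) := by
        rw [List.range'_concat]
        simp only [one_mul, List.map_append, List.prod_append, List.map_cons, List.map_nil,
          List.prod_cons, List.prod_nil, mul_one, Nat.add_comm 1 i]
      have hsum : (∑ m ∈ Icc 1 (i + 1 - 1), X m ⊗ₜ[RatFunc ℚ] Y m (i + 1)) =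
          (∑ m ∈ Icc 1 (i - 1), X m ⊗ₜ[RatFunc ℚ] Y m (i + 1)) +
            X i ⊗ₜ[RatFunc ℚ] Y i (i + 1) := by
        rw [show i + 1 - 1 = (i - 1) + 1 by omega, Finset.sum_Icc_succ_top (by omega),
          show i - 1 + 1 = i by omega]
      rw [hX i hi, map_sub, map_smul, map_mul, map_mul, IH hin, hΔE (i + 1) (by omega) hsn,
        hPk, hsum]
      rw [split3]
      have hA : (1 ⊗ₜ[RatFunc ℚ] X i) *
            (E (i + 1) ⊗ₜ[RatFunc ℚ] Kg (i + 1) + 1 ⊗ₜ[RatFunc ℚ] E (i + 1)) -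
            q • ((E (i + 1) ⊗ₜ[RatFunc ℚ] Kg (i + 1) + 1 ⊗ₜ[RatFunc ℚ] E (i + 1)) *
              (1 ⊗ₜ[RatFunc ℚ] X i)) =
          1 ⊗ₜ[RatFunc ℚ] (X i * E (i + 1) - q • (E (i + 1) * X i)) := by
        rw [mul_add, add_mul]
        simp only [Algebra.TensorProduct.tmul_mul_tmul, one_mul, mul_one]
        rw [hkX, tmul_qsmul, smul_add, smul_qinv, tmul_sub, tmul_qsmul]
        abel
      have hS : (∑ m ∈ Icc 1 (i - 1), X m ⊗ₜ[RatFunc ℚ] Y m i) *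
            (E (i + 1) ⊗ₜ[RatFunc ℚ] Kg (i + 1) + 1 ⊗ₜ[RatFunc ℚ] E (i + 1)) -
            q • ((E (i + 1) ⊗ₜ[RatFunc ℚ] Kg (i + 1) + 1 ⊗ₜ[RatFunc ℚ] E (i + 1)) *
              ∑ m ∈ Icc 1 (i - 1), X m ⊗ₜ[RatFunc ℚ] Y m i) =
          ∑ m ∈ Icc 1 (i - 1), X m ⊗ₜ[RatFunc ℚ] Y m (i + 1) := by
        rw [Finset.sum_mul, Finset.mul_sum, Finset.smul_sum, ← Finset.sum_sub_distrib]
        refine Finset.sum_congr rfl ?_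
        intro m hm
        rw [Finset.mem_Icc] at hm
        have hmE : E (i + 1) * X m = X m * E (i + 1) :=
          hEX m hm.1 (i + 1) (by omega) hsn
        have hkY : Kg (i + 1) * Y m i = q ^ (-1 : ℤ) • (Y m i * Kg (i + 1)) := by
          have h := hKY m hm.1 i (by omega) (i + 1) (by omega) hsn
          simpa using h
        rw [mul_add, add_mul]
        simp only [Algebra.TensorProduct.tmul_mul_tmul, one_mul, mul_one]
        rw [hmE, hkY, tmul_qsmul, smul_add, smul_qinv, hYstep m i (by omega), tmul_sub,
          tmul_qsmul]
        abel
      have hC : (X i ⊗ₜ[RatFunc ℚ] (List.map Kg (List.range' 1 i)).prod) *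
            (E (i + 1) ⊗ₜ[RatFunc ℚ] Kg (i + 1) + 1 ⊗ₜ[RatFunc ℚ] E (i + 1)) -
            q • ((E (i + 1) ⊗ₜ[RatFunc ℚ] Kg (i + 1) + 1 ⊗ₜ[RatFunc ℚ] E (i + 1)) *
              (X i ⊗ₜ[RatFunc ℚ] (List.map Kg (List.range' 1 i)).prod)) =
          X i ⊗ₜ[RatFunc ℚ] Y i (i + 1) +
            (X i * E (i + 1) - q • (E (i + 1) * X i)) ⊗ₜ[RatFunc ℚ]
              ((List.map Kg (List.range' 1 i)).prod * Kg (i + 1)) := by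
        rw [mul_add, add_mul]
        simp only [Algebra.TensorProduct.tmul_mul_tmul, one_mul, mul_one]
        rw [K_prod_comm Kg hKK, hYstep i i le_rfl, hYbase i, tmul_sub, tmul_qsmul,
          sub_tmul, qsmul_tmul, smul_add]
        abel
      rw [hA, hS, hC]
      abel
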